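/- Let 1 ≤ p < ∞ and let μ₀, μ₁, ν be Borel probability measures on ℝ^d supported in B(0,M). Then both |W̲_p^p(μ₁,ν) − W̲_p^p(μ₀,ν)| and |W̄_p^p(μ₁,ν) − W̄_p^p(μ₀,ν)| are bounded by C_{p,M} · W̄₁(μ₀,μ₁), where C_{p,M} = p·2^{p−1}·M^{p−1}. -/

import Mathlib

open MeasureTheory Metric

noncomputable section

/-- The p-th power of the p-Wasserstein distance, as infimum of transport cost over couplings. -/
def Wpp {E : Type*} [NormedAddCommGroup E] [MeasurableSpace E]
    (p : ℝ) (μ ν : Measure E) : ℝ :=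
  sInf {r | ∃ π : Measure (E × E),
    π.map Prod.fst = μ ∧ π.map Prod.snd = ν ∧ r = ∫ z, ‖z.1 - z.2‖ ^ p ∂π}

variable {d : ℕ}

/-- The uniform probability distribution on the unit sphere of ℝ^d. -/
def unifSphere (d : ℕ) : Measure (sphere (0 : EuclideanSpace ℝ (Fin d)) 1) :=
  ((volume : Measure (EuclideanSpace ℝ (Fin d))).toSphere Set.univ)⁻¹ •
    (volume : Measure (EuclideanSpace ℝ (Fin d))).toSphere

/-- The pushforward of μ under the projection x ↦ θᵀx. -/
def projMeasure (θ : sphere (0 : EuclideanSpace ℝ (Fin d)) 1)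
    (μ : Measure (EuclideanSpace ℝ (Fin d))) : Measure ℝ :=
  μ.map (fun x => (inner ℝ (θ : EuclideanSpace ℝ (Fin d)) x : ℝ))

/-- The p-th power of the average-sliced p-Wasserstein distance. -/
def avgSlicedWpp (p : ℝ) (μ ν : Measure (EuclideanSpace ℝ (Fin d))) : ℝ :=
  ∫ θ : sphere (0 : EuclideanSpace ℝ (Fin d)) 1,
    Wpp p (projMeasure θ μ) (projMeasure θ ν) ∂(unifSphere d)

/-- The p-th power of the max-sliced p-Wasserstein distance. -/
def maxSlicedWpp (p : ℝ) (μ ν : Measure (EuclideanSpace ℝ (Fin d))) : ℝ :=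
  ⨆ θ : sphere (0 : EuclideanSpace ℝ (Fin d)) 1,
    Wpp p (projMeasure θ μ) (projMeasure θ ν)

section Aux
open ProbabilityTheory


lemma rpow_lip {p R s t : ℝ} (hp : 1 ≤ p) (hR : 0 ≤ R)
    (hs : s ∈ Set.Icc 0 R) (ht : t ∈ Set.Icc 0 R) :
    |s ^ p - t ^ p| ≤ p * R ^ (p - 1) * |s - t| := by
  have hderiv : ∀ x ∈ Set.Icc (0:ℝ) R, HasDerivWithinAt (fun x : ℝ => x ^ p)
      (p * x ^ (p - 1)) (Set.Icc 0 R) x := fun x _ =>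
    (Real.hasDerivAt_rpow_const (Or.inr hp)).hasDerivWithinAt
  have hbound : ∀ x ∈ Set.Icc (0:ℝ) R, ‖p * x ^ (p - 1)‖ ≤ p * R ^ (p - 1) := by
    intro x hx
    have h1 : (0:ℝ) ≤ p := le_trans zero_le_one hp
    have h2 : x ^ (p - 1) ≤ R ^ (p - 1) :=
      Real.rpow_le_rpow hx.1 hx.2 (by linarith)
    have h3 : (0:ℝ) ≤ x ^ (p-1) := Real.rpow_nonneg hx.1 _
    rw [Real.norm_eq_abs, abs_of_nonneg (mul_nonneg h1 h3)]
    exact mul_le_mul_of_nonneg_left h2 h1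
  have := (convex_Icc (0:ℝ) R).norm_image_sub_le_of_norm_hasDerivWithin_le hderiv hbound ht hs
  simpa [Real.norm_eq_abs] using this

lemma cost_key {p M a b c : ℝ} (hp : 1 ≤ p) (hM : 0 ≤ M)
    (ha : |a| ≤ M) (hb : |b| ≤ M) (hc : |c| ≤ M) :
    |b - c| ^ p ≤ |a - c| ^ p + p * (2 * M) ^ (p - 1) * |a - b| := by
  have h2M : (0:ℝ) ≤ 2 * M := by linarith
  have hbc : |b - c| ∈ Set.Icc 0 (2*M) :=
    ⟨abs_nonneg _, (abs_sub _ _).trans (by linarith)⟩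
  have hac : |a - c| ∈ Set.Icc 0 (2*M) :=
    ⟨abs_nonneg _, (abs_sub _ _).trans (by linarith)⟩
  have h1 := rpow_lip hp h2M hbc hac
  have h2 : |(|b - c|) - (|a - c|)| ≤ |a - b| := by
    calc |(|b - c|) - (|a - c|)| ≤ |(b - c) - (a - c)| := abs_abs_sub_abs_le_abs_sub _ _
    _ = |b - a| := by ring_nf
    _ = |a - b| := abs_sub_comm _ _
  have hL : (0:ℝ) ≤ p * (2*M) ^ (p-1) :=
    mul_nonneg (by linarith) (Real.rpow_nonneg h2M _)
  nlinarith [le_abs_self (|b-c|^p - |a-c|^p), abs_nonneg (a - b)]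

variable {p : ℝ} {μ ν : Measure ℝ}


lemma cost_meas (hp0 : 0 ≤ p) : Measurable fun z : ℝ × ℝ => ‖z.1 - z.2‖ ^ p :=
  ((Real.continuous_rpow_const hp0).comp
    ((continuous_fst.sub continuous_snd).norm)).measurable

lemma wpp_set_nonneg {E : Type*} [NormedAddCommGroup E] [MeasurableSpace E]
    {μ ν : Measure E} {r : ℝ} (h : r ∈ {r | ∃ π : Measure (E × E),
    π.map Prod.fst = μ ∧ π.map Prod.snd = ν ∧ r = ∫ z, ‖z.1 - z.2‖ ^ p ∂π}) : 0 ≤ r := by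
  obtain ⟨π, -, -, rfl⟩ := h
  exact integral_nonneg fun z => Real.rpow_nonneg (norm_nonneg _) _

lemma wpp_nonneg {E : Type*} [NormedAddCommGroup E] [MeasurableSpace E]
    (p : ℝ) (μ ν : Measure E) : 0 ≤ Wpp p μ ν :=
  Real.sInf_nonneg fun _ h => wpp_set_nonneg h

lemma wpp_le {E : Type*} [NormedAddCommGroup E] [MeasurableSpace E] {μ ν : Measure E}
    {π : Measure (E × E)} (h1 : π.map Prod.fst = μ) (h2 : π.map Prod.snd = ν) :
    Wpp p μ ν ≤ ∫ z, ‖z.1 - z.2‖ ^ p ∂π :=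
  csInf_le ⟨0, fun _ h => wpp_set_nonneg h⟩ ⟨π, h1, h2, rfl⟩

lemma wpp_set_nonempty {E : Type*} [NormedAddCommGroup E] [MeasurableSpace E]
    (μ ν : Measure E) [IsProbabilityMeasure μ] [IsProbabilityMeasure ν] :
    Set.Nonempty {r | ∃ π : Measure (E × E),
      π.map Prod.fst = μ ∧ π.map Prod.snd = ν ∧ r = ∫ z, ‖z.1 - z.2‖ ^ p ∂π} :=
  ⟨_, μ.prod ν, by simp, by simp, rfl⟩

lemma wpp_exists_lt {E : Type*} [NormedAddCommGroup E] [MeasurableSpace E] {μ ν : Measure E}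
    [IsProbabilityMeasure μ] [IsProbabilityMeasure ν] {r : ℝ}
    (h : Wpp p μ ν < r) : ∃ π : Measure (E × E),
      π.map Prod.fst = μ ∧ π.map Prod.snd = ν ∧ ∫ z, ‖z.1 - z.2‖ ^ p ∂π < r := by
  obtain ⟨r', ⟨π, h1, h2, rfl⟩, hlt⟩ := exists_lt_of_csInf_lt (wpp_set_nonempty μ ν) h
  exact ⟨π, h1, h2, hlt⟩

lemma coupling_prob {E : Type*} [MeasurableSpace E] {μ : Measure E}
    {π : Measure (E × E)} [IsProbabilityMeasure μ]
    (h1 : π.map Prod.fst = μ) : IsProbabilityMeasure π := by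
  constructor
  have := congrArg (fun m : Measure E => m Set.univ) h1
  simpa [Measure.map_apply measurable_fst MeasurableSet.univ] using this

lemma wpp_symm (hp0 : 0 ≤ p) (μ ν : Measure ℝ)
    [IsProbabilityMeasure μ] [IsProbabilityMeasure ν] :
    Wpp p μ ν = Wpp p ν μ := by
  have key : ∀ (μ ν : Measure ℝ), ∀ _ : IsProbabilityMeasure μ, ∀ _ : IsProbabilityMeasure ν,
      Wpp p ν μ ≤ Wpp p μ ν := by
    intro μ ν hμ hν
    refine le_csInf (wpp_set_nonempty μ ν) ?_
    rintro r ⟨π, h1, h2, rfl⟩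
    have hs1 : (π.map Prod.swap).map Prod.fst = ν := by
      rw [Measure.map_map measurable_fst measurable_swap]; exact h2
    have hs2 : (π.map Prod.swap).map Prod.snd = μ := by
      rw [Measure.map_map measurable_snd measurable_swap]; exact h1
    refine (wpp_le hs1 hs2).trans ?_
    rw [integral_map measurable_swap.aemeasurable (cost_meas hp0).aestronglyMeasurable]
    refine le_of_eq (integral_congr_ae (Filter.Eventually.of_forall fun z => ?_))
    show ‖z.2 - z.1‖ ^ p = ‖z.1 - z.2‖ ^ p
    rw [norm_sub_rev]
  exact le_antisymm (key ν μ ‹_› ‹_›) (key μ ν ‹_› ‹_›)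

lemma ae_of_map {X Y : Type*} [MeasurableSpace X] [MeasurableSpace Y]
    {ρ : Measure X} {f : X → Y} (hf : Measurable f) {μ : Measure Y}
    (h : ρ.map f = μ) {s : Set Y} (hs : MeasurableSet s)
    (hμ : ∀ᵐ y ∂μ, y ∈ s) : ∀ᵐ x ∂ρ, f x ∈ s := by
  rw [ae_iff] at hμ ⊢
  have heq : {x | ¬ f x ∈ s} = f ⁻¹' sᶜ := rfl
  rw [heq, ← Measure.map_apply hf hs.compl, h]
  exact hμ

-- integrable of a.e. bounded measurable on finite measure
lemma int_of_bdd {X : Type*} [MeasurableSpace X] {ρ : Measure X} [IsFiniteMeasure ρ]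
    {f : X → ℝ} (hf : Measurable f) {C : ℝ} (hb : ∀ᵐ x ∂ρ, |f x| ≤ C) :
    Integrable f ρ :=
  Integrable.mono' (integrable_const C) hf.aestronglyMeasurable
    (by filter_upwards [hb] with x hx using by rwa [Real.norm_eq_abs])

lemma wpp_le_bound {p M : ℝ} (hp0 : 0 ≤ p) (hM : 0 ≤ M) (μ ν : Measure ℝ)
    [IsProbabilityMeasure μ] [IsProbabilityMeasure ν]
    (hμ : ∀ᵐ x ∂μ, x ∈ Set.Icc (-M) M) (hν : ∀ᵐ x ∂ν, x ∈ Set.Icc (-M) M) :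
    Wpp p μ ν ≤ (2 * M) ^ p := by
  have h1 : (μ.prod ν).map Prod.fst = μ := by simp
  have h2 : (μ.prod ν).map Prod.snd = ν := by simp
  refine (wpp_le h1 h2).trans ?_
  have hae1 : ∀ᵐ z ∂(μ.prod ν), z.1 ∈ Set.Icc (-M) M :=
    ae_of_map measurable_fst h1 measurableSet_Icc hμ
  have hae2 : ∀ᵐ z ∂(μ.prod ν), z.2 ∈ Set.Icc (-M) M :=
    ae_of_map measurable_snd h2 measurableSet_Icc hν
  have hle : ∀ᵐ z ∂(μ.prod ν), ‖z.1 - z.2‖ ^ p ≤ (2 * M) ^ p := by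
    filter_upwards [hae1, hae2] with z h1 h2
    refine Real.rpow_le_rpow (norm_nonneg _) ?_ hp0
    rw [Real.norm_eq_abs]
    rw [Set.mem_Icc, ← abs_le] at h1 h2
    calc |z.1 - z.2| ≤ |z.1| + |z.2| := abs_sub _ _
    _ ≤ 2 * M := by linarith
  have step : ∫ z, ‖z.1 - z.2‖ ^ p ∂(μ.prod ν) ≤ ∫ _, (2 * M) ^ p ∂(μ.prod ν) :=
    integral_mono_of_nonneg
      (Filter.Eventually.of_forall fun z => Real.rpow_nonneg (norm_nonneg _) _)
      (integrable_const _) hle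
  simpa using step

section Gluing

variable {p M : ℝ}

lemma glue_marginals {κ π : Measure (ℝ × ℝ)} [IsProbabilityMeasure κ] [IsProbabilityMeasure π]
    {α : Measure ℝ} [IsProbabilityMeasure α]
    (hκ1 : κ.map Prod.fst = α) (hπ1 : π.map Prod.fst = α) :
    (α.compProd (κ.condKernel ×ₖ π.condKernel)).map (fun z => (z.1, z.2.1)) = κ ∧
    (α.compProd (κ.condKernel ×ₖ π.condKernel)).map (fun z => (z.1, z.2.2)) = π := by
  have hκfst : κ.fst = α := hκ1
  have hπfst : π.fst = α := hπ1
  have hκd : α.compProd κ.condKernel = κ := by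
    conv_rhs => rw [← κ.disintegrate κ.condKernel]
    rw [hκfst]
  have hπd : α.compProd π.condKernel = π := by
    conv_rhs => rw [← π.disintegrate π.condKernel]
    rw [hπfst]
  constructor
  · refine Eq.trans ?_ hκd
    ext s hs
    have hf : Measurable fun z : ℝ × ℝ × ℝ => (z.1, z.2.1) :=
      measurable_fst.prodMk (measurable_fst.comp measurable_snd)
    rw [Measure.map_apply hf hs, Measure.compProd_apply (hf hs), Measure.compProd_apply hs]
    refine lintegral_congr fun a => ?_
    have hpre : Prod.mk a ⁻¹' ((fun z : ℝ × ℝ × ℝ => (z.1, z.2.1)) ⁻¹' s)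
        = Prod.fst ⁻¹' (Prod.mk a ⁻¹' s) := rfl
    rw [hpre, Kernel.prod_apply, ← Measure.fst_apply (measurable_prodMk_left hs),
      Measure.fst_prod]
  · refine Eq.trans ?_ hπd
    ext s hs
    have hf : Measurable fun z : ℝ × ℝ × ℝ => (z.1, z.2.2) :=
      measurable_fst.prodMk (measurable_snd.comp measurable_snd)
    rw [Measure.map_apply hf hs, Measure.compProd_apply (hf hs), Measure.compProd_apply hs]
    refine lintegral_congr fun a => ?_
    have hpre : Prod.mk a ⁻¹' ((fun z : ℝ × ℝ × ℝ => (z.1, z.2.2)) ⁻¹' s)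
        = Prod.snd ⁻¹' (Prod.mk a ⁻¹' s) := rfl
    rw [hpre, Kernel.prod_apply, ← Measure.snd_apply (measurable_prodMk_left hs),
      Measure.snd_prod]

end Gluing

lemma rpow_cost_bound {p M x y : ℝ} (hp0 : 0 ≤ p) (hM : 0 ≤ M)
    (hx : x ∈ Set.Icc (-M) M) (hy : y ∈ Set.Icc (-M) M) :
    |‖x - y‖ ^ p| ≤ (2 * M) ^ p := by
  rw [abs_of_nonneg (Real.rpow_nonneg (norm_nonneg _) _)]
  refine Real.rpow_le_rpow (norm_nonneg _) ?_ hp0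
  rw [Real.norm_eq_abs]
  rw [Set.mem_Icc, ← abs_le] at hx hy
  calc |x - y| ≤ |x| + |y| := abs_sub _ _
  _ ≤ 2 * M := by linarith

lemma key1D {p M : ℝ} (hp : 1 ≤ p) (hM : 0 ≤ M) (α β γ : Measure ℝ)
    [IsProbabilityMeasure α] [IsProbabilityMeasure β] [IsProbabilityMeasure γ]
    (hα : ∀ᵐ x ∂α, x ∈ Set.Icc (-M) M) (hβ : ∀ᵐ x ∂β, x ∈ Set.Icc (-M) M)
    (hγ : ∀ᵐ x ∂γ, x ∈ Set.Icc (-M) M) :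
    Wpp p β γ ≤ Wpp p α γ + p * (2 * M) ^ (p - 1) * Wpp 1 α β := by
  have hp0 : (0:ℝ) ≤ p := le_trans zero_le_one hp
  set L := p * (2 * M) ^ (p - 1) with hLdef
  have hL : 0 ≤ L := mul_nonneg hp0 (Real.rpow_nonneg (by linarith) _)
  refine le_of_forall_pos_le_add fun ε hε => ?_
  set δ := ε / (1 + L) with hδdef
  have hδ : 0 < δ := div_pos hε (by linarith)
  obtain ⟨π, hπ1, hπ2, hπc⟩ := wpp_exists_lt (μ := α) (ν := γ)
    (lt_add_of_pos_right (Wpp p α γ) hδ)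
  obtain ⟨κ, hκ1, hκ2, hκc⟩ := wpp_exists_lt (p := 1) (μ := α) (ν := β)
    (lt_add_of_pos_right (Wpp 1 α β) hδ)
  haveI : IsProbabilityMeasure π := coupling_prob hπ1
  haveI : IsProbabilityMeasure κ := coupling_prob hκ1
  set ρ := α.compProd (κ.condKernel ×ₖ π.condKernel) with hρdef
  obtain ⟨hAκ, hAπ⟩ := glue_marginals hκ1 hπ1
  haveI : IsProbabilityMeasure ρ := by
    constructor
    rw [hρdef, Measure.compProd_apply_univ]
    exact measure_univ
  have hfκ : Measurable fun z : ℝ × ℝ × ℝ => (z.1, z.2.1) :=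
    measurable_fst.prodMk (measurable_fst.comp measurable_snd)
  have hfπ : Measurable fun z : ℝ × ℝ × ℝ => (z.1, z.2.2) :=
    measurable_fst.prodMk (measurable_snd.comp measurable_snd)
  -- marginals of the glued coupling of (β, γ)
  have hτ1 : (ρ.map Prod.snd).map Prod.fst = β := by
    rw [Measure.map_map measurable_fst measurable_snd]
    have heq : (Prod.fst ∘ Prod.snd : ℝ × ℝ × ℝ → ℝ)
        = (fun w : ℝ × ℝ => w.2) ∘ (fun z : ℝ × ℝ × ℝ => (z.1, z.2.1)) := rfl
    rw [heq, ← Measure.map_map measurable_snd hfκ, hAκ, hκ2]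
  have hτ2 : (ρ.map Prod.snd).map Prod.snd = γ := by
    rw [Measure.map_map measurable_snd measurable_snd]
    have heq : (Prod.snd ∘ Prod.snd : ℝ × ℝ × ℝ → ℝ)
        = (fun w : ℝ × ℝ => w.2) ∘ (fun z : ℝ × ℝ × ℝ => (z.1, z.2.2)) := rfl
    rw [heq, ← Measure.map_map measurable_snd hfπ, hAπ, hπ2]
  have hWle : Wpp p β γ ≤ ∫ w, ‖w.1 - w.2‖ ^ p ∂(ρ.map Prod.snd) := wpp_le hτ1 hτ2
  have hcτ : ∫ w, ‖w.1 - w.2‖ ^ p ∂(ρ.map Prod.snd) = ∫ z, ‖z.2.1 - z.2.2‖ ^ p ∂ρ :=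
    integral_map measurable_snd.aemeasurable (cost_meas hp0).aestronglyMeasurable
  have hcπ : ∫ w, ‖w.1 - w.2‖ ^ p ∂π = ∫ z, ‖z.1 - z.2.2‖ ^ p ∂ρ := by
    rw [← hAπ, integral_map hfπ.aemeasurable (cost_meas hp0).aestronglyMeasurable]
  have hcκ : ∫ w, ‖w.1 - w.2‖ ^ (1:ℝ) ∂κ = ∫ z, ‖z.1 - z.2.1‖ ^ (1:ℝ) ∂ρ := by
    rw [← hAκ, integral_map hfκ.aemeasurable (cost_meas zero_le_one).aestronglyMeasurable]
  -- a.e. bounds on ρ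
  have hm1 : ρ.map (fun z : ℝ × ℝ × ℝ => z.1) = α := by
    have heq : (fun z : ℝ × ℝ × ℝ => z.1)
        = (Prod.fst : ℝ × ℝ → ℝ) ∘ (fun z : ℝ × ℝ × ℝ => (z.1, z.2.1)) := rfl
    rw [heq, ← Measure.map_map measurable_fst hfκ, hAκ, hκ1]
  have hm2 : ρ.map (fun z : ℝ × ℝ × ℝ => z.2.1) = β := by
    have heq : (fun z : ℝ × ℝ × ℝ => z.2.1)
        = (Prod.snd : ℝ × ℝ → ℝ) ∘ (fun z : ℝ × ℝ × ℝ => (z.1, z.2.1)) := rfl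
    rw [heq, ← Measure.map_map measurable_snd hfκ, hAκ, hκ2]
  have hm3 : ρ.map (fun z : ℝ × ℝ × ℝ => z.2.2) = γ := by
    have heq : (fun z : ℝ × ℝ × ℝ => z.2.2)
        = (Prod.snd : ℝ × ℝ → ℝ) ∘ (fun z : ℝ × ℝ × ℝ => (z.1, z.2.2)) := rfl
    rw [heq, ← Measure.map_map measurable_snd hfπ, hAπ, hπ2]
  have hb1 : ∀ᵐ z ∂ρ, z.1 ∈ Set.Icc (-M) M :=
    ae_of_map measurable_fst hm1 measurableSet_Icc hα
  have hb2 : ∀ᵐ z ∂ρ, z.2.1 ∈ Set.Icc (-M) M :=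
    ae_of_map (measurable_fst.comp measurable_snd) hm2 measurableSet_Icc hβ
  have hb3 : ∀ᵐ z ∂ρ, z.2.2 ∈ Set.Icc (-M) M :=
    ae_of_map (measurable_snd.comp measurable_snd) hm3 measurableSet_Icc hγ
  -- integrability
  have hg : Integrable (fun z : ℝ × ℝ × ℝ => ‖z.1 - z.2.2‖ ^ p) ρ := by
    refine int_of_bdd ((cost_meas hp0).comp hfπ) (C := (2 * M) ^ p) ?_
    filter_upwards [hb1, hb3] with z h1 h3 using rpow_cost_bound hp0 hM h1 h3
  have hh : Integrable (fun z : ℝ × ℝ × ℝ => ‖z.1 - z.2.1‖ ^ (1:ℝ)) ρ := by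
    refine int_of_bdd ((cost_meas zero_le_one).comp hfκ) (C := (2 * M) ^ (1:ℝ)) ?_
    filter_upwards [hb1, hb2] with z h1 h2 using rpow_cost_bound zero_le_one hM h1 h2
  -- pointwise comparison
  have hpt : ∀ᵐ z ∂ρ, ‖z.2.1 - z.2.2‖ ^ p
      ≤ ‖z.1 - z.2.2‖ ^ p + L * ‖z.1 - z.2.1‖ ^ (1:ℝ) := by
    filter_upwards [hb1, hb2, hb3] with z h1 h2 h3
    rw [Set.mem_Icc, ← abs_le] at h1 h2 h3
    simp only [Real.norm_eq_abs, Real.rpow_one]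
    exact cost_key hp hM h1 h2 h3
  have step2 : ∫ z, ‖z.2.1 - z.2.2‖ ^ p ∂ρ
      ≤ ∫ z, (‖z.1 - z.2.2‖ ^ p + L * ‖z.1 - z.2.1‖ ^ (1:ℝ)) ∂ρ :=
    integral_mono_of_nonneg
      (Filter.Eventually.of_forall fun z => Real.rpow_nonneg (norm_nonneg _) _)
      (hg.add (hh.const_mul L)) hpt
  have step3 : ∫ z, (‖z.1 - z.2.2‖ ^ p + L * ‖z.1 - z.2.1‖ ^ (1:ℝ)) ∂ρ
      = (∫ z, ‖z.1 - z.2.2‖ ^ p ∂ρ) + L * ∫ z, ‖z.1 - z.2.1‖ ^ (1:ℝ) ∂ρ := by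
    rw [integral_add hg (hh.const_mul L), integral_const_mul]
  have e1 : ∫ z, ‖z.1 - z.2.2‖ ^ p ∂ρ ≤ Wpp p α γ + δ := le_of_lt (hcπ ▸ hπc)
  have e2 : ∫ z, ‖z.1 - z.2.1‖ ^ (1:ℝ) ∂ρ ≤ Wpp 1 α β + δ := le_of_lt (hcκ ▸ hκc)
  have hend : δ * (1 + L) = ε := by
    rw [hδdef]; field_simp
  calc Wpp p β γ ≤ ∫ z, ‖z.2.1 - z.2.2‖ ^ p ∂ρ := hWle.trans_eq hcτ
  _ ≤ (∫ z, ‖z.1 - z.2.2‖ ^ p ∂ρ) + L * ∫ z, ‖z.1 - z.2.1‖ ^ (1:ℝ) ∂ρ :=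
      step2.trans_eq step3
  _ ≤ (Wpp p α γ + δ) + L * (Wpp 1 α β + δ) :=
      add_le_add e1 (mul_le_mul_of_nonneg_left e2 hL)
  _ = Wpp p α γ + L * Wpp 1 α β + ε := by rw [← hend]; ring

lemma wpp_diff_le {p M : ℝ} (hp : 1 ≤ p) (hM : 0 ≤ M) (α β γ : Measure ℝ)
    [IsProbabilityMeasure α] [IsProbabilityMeasure β] [IsProbabilityMeasure γ]
    (hα : ∀ᵐ x ∂α, x ∈ Set.Icc (-M) M) (hβ : ∀ᵐ x ∂β, x ∈ Set.Icc (-M) M)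
    (hγ : ∀ᵐ x ∂γ, x ∈ Set.Icc (-M) M) :
    |Wpp p β γ - Wpp p α γ| ≤ p * (2 * M) ^ (p - 1) * Wpp 1 α β := by
  rw [abs_sub_le_iff]
  constructor
  · linarith [key1D hp hM α β γ hα hβ hγ]
  · have h := key1D hp hM β α γ hβ hα hγ
    rw [wpp_symm zero_le_one β α] at h
    linarith

section Proj

lemma proj_meas (θ : sphere (0 : EuclideanSpace ℝ (Fin d)) 1) :
    Measurable fun x : EuclideanSpace ℝ (Fin d) =>
      (inner ℝ (θ : EuclideanSpace ℝ (Fin d)) x : ℝ) :=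
  (continuous_const.inner continuous_id).measurable

lemma projMeasure_prob (θ : sphere (0 : EuclideanSpace ℝ (Fin d)) 1)
    (μ : Measure (EuclideanSpace ℝ (Fin d))) [IsProbabilityMeasure μ] :
    IsProbabilityMeasure (projMeasure θ μ) :=
  Measure.isProbabilityMeasure_map (proj_meas θ).aemeasurable

lemma ae_ball {M : ℝ} {μ : Measure (EuclideanSpace ℝ (Fin d))}
    (hμ : μ (ball (0 : EuclideanSpace ℝ (Fin d)) M)ᶜ = 0) :
    ∀ᵐ x ∂μ, ‖x‖ ≤ M := by
  rw [ae_iff]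
  refine measure_mono_null ?_ hμ
  intro x hx
  simp only [Set.mem_setOf_eq, not_le] at hx
  simp only [Set.mem_compl_iff, mem_ball, dist_zero_right, not_lt]
  exact hx.le

lemma ae_proj {M : ℝ} {μ : Measure (EuclideanSpace ℝ (Fin d))}
    (hμ : μ (ball (0 : EuclideanSpace ℝ (Fin d)) M)ᶜ = 0)
    (θ : sphere (0 : EuclideanSpace ℝ (Fin d)) 1) :
    ∀ᵐ x ∂(projMeasure θ μ), x ∈ Set.Icc (-M) M := by
  rw [projMeasure]
  refine (ae_map_iff (proj_meas θ).aemeasurable measurableSet_Icc).2 ?_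
  filter_upwards [ae_ball hμ] with x hx
  rw [← Set.mem_Icc, Set.mem_Icc, ← abs_le]
  calc |(inner ℝ (θ : EuclideanSpace ℝ (Fin d)) x : ℝ)|
      ≤ ‖(θ : EuclideanSpace ℝ (Fin d))‖ * ‖x‖ := abs_real_inner_le_norm _ _
  _ = ‖x‖ := by rw [mem_sphere_zero_iff_norm.1 θ.2, one_mul]
  _ ≤ M := hx

lemma wpp1_proj_le {M : ℝ} {μ : Measure (EuclideanSpace ℝ (Fin d))} [IsProbabilityMeasure μ]
    (hμ : μ (ball (0 : EuclideanSpace ℝ (Fin d)) M)ᶜ = 0)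
    (θ θ' : sphere (0 : EuclideanSpace ℝ (Fin d)) 1) :
    Wpp 1 (projMeasure θ μ) (projMeasure θ' μ)
      ≤ M * ‖(θ : EuclideanSpace ℝ (Fin d)) - (θ' : EuclideanSpace ℝ (Fin d))‖ := by
  set f := fun x : EuclideanSpace ℝ (Fin d) =>
    ((inner ℝ (θ : EuclideanSpace ℝ (Fin d)) x : ℝ), (inner ℝ (θ' : EuclideanSpace ℝ (Fin d)) x : ℝ))
    with hfdef
  have hf : Measurable f := (proj_meas θ).prodMk (proj_meas θ')
  have h1 : (μ.map f).map Prod.fst = projMeasure θ μ := by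
    rw [Measure.map_map measurable_fst hf]; rfl
  have h2 : (μ.map f).map Prod.snd = projMeasure θ' μ := by
    rw [Measure.map_map measurable_snd hf]; rfl
  refine (wpp_le h1 h2).trans ?_
  rw [integral_map hf.aemeasurable (cost_meas zero_le_one).aestronglyMeasurable]
  have hpt : ∀ᵐ x ∂μ, ‖(f x).1 - (f x).2‖ ^ (1:ℝ)
      ≤ M * ‖(θ : EuclideanSpace ℝ (Fin d)) - (θ' : EuclideanSpace ℝ (Fin d))‖ := by
    filter_upwards [ae_ball hμ] with x hx
    rw [Real.rpow_one, Real.norm_eq_abs]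
    have : (f x).1 - (f x).2
        = (inner ℝ ((θ : EuclideanSpace ℝ (Fin d)) - (θ' : EuclideanSpace ℝ (Fin d))) x : ℝ) := by
      rw [hfdef]; simp [inner_sub_left]
    rw [this]
    calc |(inner ℝ ((θ : EuclideanSpace ℝ (Fin d)) - (θ' : EuclideanSpace ℝ (Fin d))) x : ℝ)|
        ≤ ‖(θ : EuclideanSpace ℝ (Fin d)) - (θ' : EuclideanSpace ℝ (Fin d))‖ * ‖x‖ :=
          abs_real_inner_le_norm _ _
    _ ≤ ‖(θ : EuclideanSpace ℝ (Fin d)) - (θ' : EuclideanSpace ℝ (Fin d))‖ * M :=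
          mul_le_mul_of_nonneg_left hx (norm_nonneg _)
    _ = M * ‖(θ : EuclideanSpace ℝ (Fin d)) - (θ' : EuclideanSpace ℝ (Fin d))‖ := mul_comm _ _
  have step : ∫ x, ‖(f x).1 - (f x).2‖ ^ (1:ℝ) ∂μ
      ≤ ∫ _, M * ‖(θ : EuclideanSpace ℝ (Fin d)) - (θ' : EuclideanSpace ℝ (Fin d))‖ ∂μ :=
    integral_mono_of_nonneg
      (Filter.Eventually.of_forall fun x => Real.rpow_nonneg (norm_nonneg _) _)
      (integrable_const _) hpt
  simpa using step

lemma g_lip {p M : ℝ} (hp : 1 ≤ p) (hM : 0 ≤ M)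
    (μ ν : Measure (EuclideanSpace ℝ (Fin d)))
    [IsProbabilityMeasure μ] [IsProbabilityMeasure ν]
    (hμ : μ (ball (0 : EuclideanSpace ℝ (Fin d)) M)ᶜ = 0)
    (hν : ν (ball (0 : EuclideanSpace ℝ (Fin d)) M)ᶜ = 0)
    (θ θ' : sphere (0 : EuclideanSpace ℝ (Fin d)) 1) :
    |Wpp p (projMeasure θ' μ) (projMeasure θ' ν) - Wpp p (projMeasure θ μ) (projMeasure θ ν)|
      ≤ (2 * (p * (2 * M) ^ (p - 1)) * M) * dist θ θ' := by
  have hp0 : (0:ℝ) ≤ p := le_trans zero_le_one hp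
  haveI := projMeasure_prob θ μ
  haveI := projMeasure_prob θ' μ
  haveI := projMeasure_prob θ ν
  haveI := projMeasure_prob θ' ν
  set L : ℝ := p * (2 * M) ^ (p - 1) with hLdef
  have hL : 0 ≤ L := mul_nonneg hp0 (Real.rpow_nonneg (by linarith) _)
  have h1 : |Wpp p (projMeasure θ' μ) (projMeasure θ' ν)
      - Wpp p (projMeasure θ μ) (projMeasure θ' ν)|
      ≤ L * Wpp 1 (projMeasure θ μ) (projMeasure θ' μ) :=
    wpp_diff_le hp hM _ _ _ (ae_proj hμ θ) (ae_proj hμ θ') (ae_proj hν θ')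
  have h2 : |Wpp p (projMeasure θ μ) (projMeasure θ' ν)
      - Wpp p (projMeasure θ μ) (projMeasure θ ν)|
      ≤ L * Wpp 1 (projMeasure θ ν) (projMeasure θ' ν) := by
    rw [wpp_symm hp0 (projMeasure θ μ) (projMeasure θ' ν),
      wpp_symm hp0 (projMeasure θ μ) (projMeasure θ ν)]
    exact wpp_diff_le hp hM _ _ _ (ae_proj hν θ) (ae_proj hν θ') (ae_proj hμ θ)
  have hd : dist θ θ' = ‖(θ : EuclideanSpace ℝ (Fin d)) - (θ' : EuclideanSpace ℝ (Fin d))‖ := by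
    rw [Subtype.dist_eq, dist_eq_norm]
  have hw1 := wpp1_proj_le hμ θ θ'
  have hw2 := wpp1_proj_le hν θ θ'
  calc |Wpp p (projMeasure θ' μ) (projMeasure θ' ν) - Wpp p (projMeasure θ μ) (projMeasure θ ν)|
      ≤ |Wpp p (projMeasure θ' μ) (projMeasure θ' ν)
          - Wpp p (projMeasure θ μ) (projMeasure θ' ν)|
        + |Wpp p (projMeasure θ μ) (projMeasure θ' ν)
          - Wpp p (projMeasure θ μ) (projMeasure θ ν)| := abs_sub_le _ _ _
  _ ≤ L * Wpp 1 (projMeasure θ μ) (projMeasure θ' μ)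
        + L * Wpp 1 (projMeasure θ ν) (projMeasure θ' ν) := add_le_add h1 h2
  _ ≤ L * (M * ‖(θ : EuclideanSpace ℝ (Fin d)) - (θ' : EuclideanSpace ℝ (Fin d))‖)
        + L * (M * ‖(θ : EuclideanSpace ℝ (Fin d)) - (θ' : EuclideanSpace ℝ (Fin d))‖) :=
      add_le_add (mul_le_mul_of_nonneg_left hw1 hL) (mul_le_mul_of_nonneg_left hw2 hL)
  _ = (2 * L * M) * dist θ θ' := by rw [hd]; ring

end Proj

end Aux

/-- For 1 ≤ p < ∞ and μ₀, μ₁, ν supported in B(0,M), both the average-sliced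
and the max-sliced p-Wasserstein p-th powers are Lipschitz in the max-sliced W₁ distance:
|W̲_p^p(μᵢ,ν) − W̲_p^p(μ₀,ν)| ∨ |W̄_p^p(μ₁,ν) − W̄_p^p(μ₀,ν)| ≤ p·2^(p−1)·M^(p−1)·W̄₁(μ₀,μ₁). -/
theorem stmt4 (p M : ℝ) (hp : 1 ≤ p) (hM : 0 < M) (hd : 0 < d)
    (μ₀ μ₁ ν : Measure (EuclideanSpace ℝ (Fin d)))
    [IsProbabilityMeasure μ₀] [IsProbabilityMeasure μ₁] [IsProbabilityMeasure ν]
    (hμ₀ : μ₀ (ball (0 : EuclideanSpace ℝ (Fin d)) M)ᶜ = 0)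
    (hμ₁ : μ₁ (ball (0 : EuclideanSpace ℝ (Fin d)) M)ᶜ = 0)
    (hν : ν (ball (0 : EuclideanSpace ℝ (Fin d)) M)ᶜ = 0) :
    |avgSlicedWpp p μ₁ ν - avgSlicedWpp p μ₀ ν| ≤
        p * 2 ^ (p - 1) * M ^ (p - 1) * maxSlicedWpp 1 μ₀ μ₁ ∧
    |maxSlicedWpp p μ₁ ν - maxSlicedWpp p μ₀ ν| ≤
        p * 2 ^ (p - 1) * M ^ (p - 1) * maxSlicedWpp 1 μ₀ μ₁ := by
  have hM0 : (0:ℝ) ≤ M := hM.le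
  have hp0 : (0:ℝ) ≤ p := le_trans zero_le_one hp
  set L : ℝ := p * (2 * M) ^ (p - 1) with hLdef
  have hL : 0 ≤ L := mul_nonneg hp0 (Real.rpow_nonneg (by linarith) _)
  have hLC : p * 2 ^ (p - 1) * M ^ (p - 1) = L := by
    rw [hLdef, Real.mul_rpow (by norm_num : (0:ℝ) ≤ 2) hM0]; ring
  -- the sphere is nonempty
  haveI hne : Nonempty (sphere (0 : EuclideanSpace ℝ (Fin d)) 1) :=
    ⟨⟨EuclideanSpace.single (⟨0, hd⟩ : Fin d) (1:ℝ), by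
      simp [mem_sphere_zero_iff_norm, EuclideanSpace.norm_single]⟩⟩
  set g₀ : sphere (0 : EuclideanSpace ℝ (Fin d)) 1 → ℝ :=
    fun θ => Wpp p (projMeasure θ μ₀) (projMeasure θ ν) with hg₀
  set g₁ : sphere (0 : EuclideanSpace ℝ (Fin d)) 1 → ℝ :=
    fun θ => Wpp p (projMeasure θ μ₁) (projMeasure θ ν) with hg₁
  set w : sphere (0 : EuclideanSpace ℝ (Fin d)) 1 → ℝ :=
    fun θ => Wpp 1 (projMeasure θ μ₀) (projMeasure θ μ₁) with hw
  have hg₀b : ∀ θ, g₀ θ ∈ Set.Icc 0 ((2*M) ^ p) := by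
    intro θ
    haveI := projMeasure_prob θ μ₀; haveI := projMeasure_prob θ ν
    exact ⟨wpp_nonneg _ _ _, wpp_le_bound hp0 hM0 _ _ (ae_proj hμ₀ θ) (ae_proj hν θ)⟩
  have hg₁b : ∀ θ, g₁ θ ∈ Set.Icc 0 ((2*M) ^ p) := by
    intro θ
    haveI := projMeasure_prob θ μ₁; haveI := projMeasure_prob θ ν
    exact ⟨wpp_nonneg _ _ _, wpp_le_bound hp0 hM0 _ _ (ae_proj hμ₁ θ) (ae_proj hν θ)⟩
  have hwb : ∀ θ, w θ ∈ Set.Icc 0 ((2*M) ^ (1:ℝ)) := by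
    intro θ
    haveI := projMeasure_prob θ μ₀; haveI := projMeasure_prob θ μ₁
    exact ⟨wpp_nonneg _ _ _, wpp_le_bound zero_le_one hM0 _ _ (ae_proj hμ₀ θ) (ae_proj hμ₁ θ)⟩
  have bdd₀ : BddAbove (Set.range g₀) := ⟨(2*M) ^ p, by rintro r ⟨θ, rfl⟩; exact (hg₀b θ).2⟩
  have bdd₁ : BddAbove (Set.range g₁) := ⟨(2*M) ^ p, by rintro r ⟨θ, rfl⟩; exact (hg₁b θ).2⟩
  have bddw : BddAbove (Set.range w) := ⟨(2*M) ^ (1:ℝ), by rintro r ⟨θ, rfl⟩; exact (hwb θ).2⟩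
  have hmax1 : maxSlicedWpp 1 μ₀ μ₁ = ⨆ θ, w θ := rfl
  have hW0 : 0 ≤ maxSlicedWpp 1 μ₀ μ₁ := by
    rw [hmax1]
    exact le_ciSup_of_le bddw (Classical.arbitrary _) (hwb _).1
  have hwle : ∀ θ, w θ ≤ maxSlicedWpp 1 μ₀ μ₁ := fun θ => by
    rw [hmax1]; exact le_ciSup bddw θ
  -- pointwise estimate
  have hpt : ∀ θ, |g₁ θ - g₀ θ| ≤ L * w θ := by
    intro θ
    haveI := projMeasure_prob θ μ₀; haveI := projMeasure_prob θ μ₁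
    haveI := projMeasure_prob θ ν
    exact wpp_diff_le hp hM0 _ _ _ (ae_proj hμ₀ θ) (ae_proj hμ₁ θ) (ae_proj hν θ)
  have hptW : ∀ θ, |g₁ θ - g₀ θ| ≤ L * maxSlicedWpp 1 μ₀ μ₁ := fun θ =>
    (hpt θ).trans (mul_le_mul_of_nonneg_left (hwle θ) hL)
  rw [hLC]
  constructor
  · -- average-sliced part
    -- Lipschitz continuity of the sliced costs
    have hlip : ∀ (μ : Measure (EuclideanSpace ℝ (Fin d))),
        ∀ _ : IsProbabilityMeasure μ, ∀ _ : μ (ball (0 : EuclideanSpace ℝ (Fin d)) M)ᶜ = 0,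
        Continuous fun θ : sphere (0 : EuclideanSpace ℝ (Fin d)) 1 =>
          Wpp p (projMeasure θ μ) (projMeasure θ ν) := by
      intro μ hprob hnull
      have : LipschitzWith (Real.toNNReal (2 * L * M))
          (fun θ : sphere (0 : EuclideanSpace ℝ (Fin d)) 1 =>
            Wpp p (projMeasure θ μ) (projMeasure θ ν)) := by
        refine LipschitzWith.of_dist_le_mul fun θ θ' => ?_
        rw [Real.dist_eq, Real.coe_toNNReal _ (by positivity)]
        have h := g_lip hp hM0 μ ν hnull hν θ' θ
        rw [dist_comm θ' θ, ← hLdef] at h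
        exact h
      exact this.continuous
    haveI : IsFiniteMeasure (unifSphere d) := by
      constructor
      rw [unifSphere, Measure.smul_apply, smul_eq_mul]
      exact lt_of_le_of_lt (ENNReal.inv_mul_le_one _) ENNReal.one_lt_top
    have hσ1 : unifSphere d Set.univ ≤ 1 := by
      rw [unifSphere, Measure.smul_apply, smul_eq_mul]
      exact ENNReal.inv_mul_le_one _
    have hmeas₀ : Measurable g₀ := (hlip μ₀ ‹_› hμ₀).measurable
    have hmeas₁ : Measurable g₁ := (hlip μ₁ ‹_› hμ₁).measurable
    have int₀ : Integrable g₀ (unifSphere d) := by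
      refine int_of_bdd hmeas₀ (C := (2*M) ^ p) ?_
      refine Filter.Eventually.of_forall fun θ => ?_
      rw [abs_of_nonneg (hg₀b θ).1]; exact (hg₀b θ).2
    have int₁ : Integrable g₁ (unifSphere d) := by
      refine int_of_bdd hmeas₁ (C := (2*M) ^ p) ?_
      refine Filter.Eventually.of_forall fun θ => ?_
      rw [abs_of_nonneg (hg₁b θ).1]; exact (hg₁b θ).2
    have havg : avgSlicedWpp p μ₁ ν - avgSlicedWpp p μ₀ ν
        = ∫ θ, (g₁ θ - g₀ θ) ∂(unifSphere d) := by
      rw [integral_sub int₁ int₀]; rfl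
    rw [havg]
    have h1 : |∫ θ, (g₁ θ - g₀ θ) ∂(unifSphere d)| ≤ ∫ θ, |g₁ θ - g₀ θ| ∂(unifSphere d) := by
      simpa [Real.norm_eq_abs] using
        norm_integral_le_integral_norm (μ := unifSphere d) (fun θ => g₁ θ - g₀ θ)
    refine h1.trans ?_
    have h2 : ∫ θ, |g₁ θ - g₀ θ| ∂(unifSphere d)
        ≤ ∫ _, L * maxSlicedWpp 1 μ₀ μ₁ ∂(unifSphere d) :=
      integral_mono (int₁.sub int₀).abs (integrable_const _)
        (fun θ => hptW θ)
    refine h2.trans ?_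
    rw [integral_const, smul_eq_mul]
    have htr : (unifSphere d Set.univ).toReal ≤ 1 := by
      have := ENNReal.toReal_mono ENNReal.one_ne_top hσ1
      simpa using this
    exact mul_le_of_le_one_left (mul_nonneg hL hW0) htr
  · -- max-sliced part
    have hmaxp₀ : maxSlicedWpp p μ₀ ν = ⨆ θ, g₀ θ := rfl
    have hmaxp₁ : maxSlicedWpp p μ₁ ν = ⨆ θ, g₁ θ := rfl
    have hsup1 : maxSlicedWpp p μ₁ ν ≤ maxSlicedWpp p μ₀ ν + L * maxSlicedWpp 1 μ₀ μ₁ := by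
      rw [hmaxp₁]
      refine ciSup_le fun θ => ?_
      have h := hptW θ
      have h' : g₀ θ ≤ maxSlicedWpp p μ₀ ν := by rw [hmaxp₀]; exact le_ciSup bdd₀ θ
      have := abs_le.1 h
      linarith [this.2]
    have hsup0 : maxSlicedWpp p μ₀ ν ≤ maxSlicedWpp p μ₁ ν + L * maxSlicedWpp 1 μ₀ μ₁ := by
      rw [hmaxp₀]
      refine ciSup_le fun θ => ?_
      have h := hptW θ
      have h' : g₁ θ ≤ maxSlicedWpp p μ₁ ν := by rw [hmaxp₁]; exact le_ciSup bdd₁ θ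
      have := abs_le.1 h
      linarith [this.1]
    rw [abs_sub_le_iff]
    exact ⟨by linarith, by linarith⟩
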